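/- Let Y, Z be real random variables on a probability space with a sub-σ-algebra 𝒢, let f : ℝ² → ℝ, h > 0, and ΔW a centered Gaussian with variance h independent of 𝒢 and of (Y_next), where Y_next is a given square-integrable random variable. Consider the minimization over 𝒢-measurable square-integrable (y, z) of E[|Y_next − (y − h·f(y, z) + z·ΔW)|²]. If f does not depend on (y,z) (f ≡ F a 𝒢-measurable random variable), then the unique minimizer is y* = E[Y_next | 𝒢] + h·F and z* = (1/h)·E[Y_next·ΔW | 𝒢]. -/

import Mathlib

open MeasureTheory ProbabilityTheory
open scoped ENNReal NNReal Real

lemma aux_L2_mul_integrable {α : Type*} [m0 : MeasurableSpace α] {μ : Measure α}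
    {f g : α → ℝ} (hf : MemLp f 2 μ) (hg : MemLp g 2 μ) :
    Integrable (fun x => f x * g x) μ := by
  have h1 : (1 : ℝ≥0∞) / 1 = 1 / 2 + 1 / 2 := by
    rw [ENNReal.div_add_div_same, one_add_one_eq_two,
      ENNReal.div_self two_ne_zero ENNReal.ofNat_ne_top, div_one]
  have h2 : MemLp (f • g) 1 μ := hg.smul hf
  exact (memLp_one_iff_integrable.mp h2).congr (ae_of_all _ fun x => by simp)

lemma aux_memLp_condexp {α : Type*} {m : MeasurableSpace α} [m0 : MeasurableSpace α]
    {μ : Measure α} [IsProbabilityMeasure μ] (hm : m ≤ m0)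
    {f : α → ℝ} (hf : MemLp f 2 μ) : MemLp (μ[f|m]) 2 μ := by
  have hg2 : MemLp ((condExpL2 ℝ ℝ hm (hf.toLp f) : α →₂[μ] ℝ) : α → ℝ) 2 μ := Lp.memLp _
  have hae : ((condExpL2 ℝ ℝ hm (hf.toLp f) : α →₂[μ] ℝ) : α → ℝ) =ᵐ[μ] μ[f|m] := by
    refine ae_eq_condExp_of_forall_setIntegral_eq hm (hf.integrable one_le_two)
      (fun s hs hμs => integrableOn_condExpL2_of_measure_ne_top hm hμs.ne _)
      (fun s hs hμs => ?_) (aestronglyMeasurable_condExpL2 hm _)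
    have hh := integral_condExpL2_eq (𝕜 := ℝ) hm (hf.toLp f) hs hμs.ne
    rw [hh]
    exact setIntegral_congr_ae (hm s hs) ((MemLp.coeFn_toLp hf).mono fun x hx _ => hx)
  exact hg2.ae_eq hae

lemma aux_sq_exp_bound {b : ℝ} (hb : 0 < b) (x : ℝ) :
    x ^ 2 * Real.exp (-b * x ^ 2) ≤ b⁻¹ := by
  have h1 : b * x ^ 2 ≤ Real.exp (b * x ^ 2) := by
    have := Real.add_one_le_exp (b * x ^ 2); nlinarith
  have h2 : x ^ 2 ≤ b⁻¹ * Real.exp (b * x ^ 2) := by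
    have h4 := mul_le_mul_of_nonneg_left h1 (inv_pos.mpr hb).le
    rwa [← mul_assoc, inv_mul_cancel₀ hb.ne', one_mul] at h4
  have h3 : Real.exp (-b * x ^ 2) = (Real.exp (b * x ^ 2))⁻¹ := by
    rw [show -b * x ^ 2 = -(b * x ^ 2) by ring, Real.exp_neg]
  rw [h3]
  have hepos : 0 < Real.exp (b * x ^ 2) := Real.exp_pos _
  calc x ^ 2 * (Real.exp (b * x ^ 2))⁻¹
      ≤ (b⁻¹ * Real.exp (b * x ^ 2)) * (Real.exp (b * x ^ 2))⁻¹ := by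
        apply mul_le_mul_of_nonneg_right h2 (by positivity)
    _ = b⁻¹ := by rw [mul_assoc, mul_inv_cancel₀ hepos.ne', mul_one]

lemma aux_sq_exp_integrable {b : ℝ} (hb : 0 < b) :
    Integrable (fun x : ℝ => x ^ 2 * Real.exp (-b * x ^ 2)) := by
  have h1 : Integrable (fun x : ℝ => Real.exp (-(b / 2) * x ^ 2)) :=
    integrable_exp_neg_mul_sq (by positivity)
  have h2 := h1.bdd_mul (c := (b / 2)⁻¹)
    (f := fun x => x ^ 2 * Real.exp (-(b / 2) * x ^ 2))
    ((by fun_prop : Continuous fun x : ℝ => x ^ 2 * Real.exp (-(b / 2) * x ^ 2)).aestronglyMeasurable)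
    (ae_of_all _ fun x => by
      rw [Real.norm_eq_abs, abs_of_nonneg (by positivity)]
      exact aux_sq_exp_bound (by positivity) x)
  refine h2.congr (ae_of_all _ fun x => ?_)
  have harg : -(b / 2) * x ^ 2 + -(b / 2) * x ^ 2 = -b * x ^ 2 := by ring
  show x ^ 2 * Real.exp (-(b / 2) * x ^ 2) * Real.exp (-(b / 2) * x ^ 2)
      = x ^ 2 * Real.exp (-b * x ^ 2)
  rw [mul_assoc, ← Real.exp_add, harg]

lemma aux_gauss_sq_integrable {v : ℝ≥0} (hv : v ≠ 0) :
    Integrable (fun x : ℝ => x ^ 2) (gaussianReal 0 v) := by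
  have hvpos : (0 : ℝ) < v := by
    exact_mod_cast pos_iff_ne_zero.mpr hv
  rw [gaussianReal_of_var_ne_zero _ hv,
    integrable_withDensity_iff (measurable_gaussianPDF _ _)
      (ae_of_all _ fun x => ENNReal.ofReal_lt_top)]
  have key := aux_sq_exp_integrable (b := (2 * (v : ℝ))⁻¹) (by positivity)
  refine (key.const_mul ((Real.sqrt (2 * Real.pi * v))⁻¹)).congr (ae_of_all _ fun x => ?_)
  simp only [gaussianPDF_def]
  rw [ENNReal.toReal_ofReal (gaussianPDFReal_nonneg _ _ _), gaussianPDFReal]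
  have harg : -(x - 0) ^ 2 / (2 * (v : ℝ)) = -(2 * (v : ℝ))⁻¹ * x ^ 2 := by
    rw [sub_zero]; field_simp
  rw [harg]; ring

lemma aux_gauss_memLp2 {v : ℝ≥0} (hv : v ≠ 0) :
    MemLp (fun x : ℝ => x) 2 (gaussianReal 0 v) :=
  (memLp_two_iff_integrable_sq aestronglyMeasurable_id).mpr (aux_gauss_sq_integrable hv)

lemma aux_gauss_mean (v : ℝ≥0) : ∫ x, x ∂(gaussianReal 0 v) = 0 := by
  by_cases hv : v = 0
  · simp [hv]
  have hmap : (gaussianReal 0 v).map ((-1 : ℝ) * ·) = gaussianReal 0 v := by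
    rw [gaussianReal_map_const_mul (-1 : ℝ)]
    norm_num
  have h1 : ∫ x, x ∂(gaussianReal 0 v) = ∫ x, (-1 : ℝ) * x ∂(gaussianReal 0 v) := by
    conv_lhs => rw [← hmap]
    rw [integral_map (φ := fun x : ℝ => (-1 : ℝ) * x) (f := fun y : ℝ => y)
      (by fun_prop) aestronglyMeasurable_id]
  rw [integral_const_mul] at h1
  linarith

theorem stmt_12 {Ω : Type*} (𝒢 : MeasurableSpace Ω) [mΩ : MeasurableSpace Ω]
    (μ : Measure Ω) [IsProbabilityMeasure μ] (h𝒢 : 𝒢 ≤ mΩ)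
    (h : ℝ) (hh : 0 < h)
    (ΔW Ynext F : Ω → ℝ)
    (hΔW : Measurable ΔW) (hYnext : MemLp Ynext 2 μ)
    (hF : Measurable[𝒢] F) (hFL2 : MemLp F 2 μ)
    (hlaw : μ.map ΔW = gaussianReal 0 ⟨h, le_of_lt hh⟩)
    (hindep : Indep (MeasurableSpace.comap ΔW Real.measurableSpace)
      (𝒢 ⊔ MeasurableSpace.comap Ynext Real.measurableSpace) μ)
    (hYnextMeas : Measurable Ynext)
    (ystar zstar : Ω → ℝ)
    (hystar : ystar =ᵐ[μ] fun ω => (μ[Ynext | 𝒢]) ω + h * F ω)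
    (hzstar : zstar =ᵐ[μ] fun ω => (1 / h) * (μ[fun ω' => Ynext ω' * ΔW ω' | 𝒢]) ω) :
    ∀ y z : Ω → ℝ, Measurable[𝒢] y → Measurable[𝒢] z → MemLp y 2 μ → MemLp z 2 μ →
      (∫ ω, |Ynext ω - (ystar ω - h * F ω + zstar ω * ΔW ω)| ^ 2 ∂μ ≤
        ∫ ω, |Ynext ω - (y ω - h * F ω + z ω * ΔW ω)| ^ 2 ∂μ) ∧
      ((∫ ω, |Ynext ω - (y ω - h * F ω + z ω * ΔW ω)| ^ 2 ∂μ =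
        ∫ ω, |Ynext ω - (ystar ω - h * F ω + zstar ω * ΔW ω)| ^ 2 ∂μ) →
        (y =ᵐ[μ] ystar ∧ z =ᵐ[μ] zstar)) := by
  set v : ℝ≥0 := ⟨h, le_of_lt hh⟩ with hv_def
  have hv : v ≠ 0 := by
    intro hc
    have : (v : ℝ) = 0 := by rw [hc]; simp
    exact hh.ne' this
  set m' : MeasurableSpace Ω := 𝒢 ⊔ MeasurableSpace.comap Ynext Real.measurableSpace
    with hm'_def
  letI : MeasurableSpace Ω := mΩ
  have hm' : m' ≤ mΩ := sup_le h𝒢 hYnextMeas.comap_le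
  -- Properties of ΔW
  have hΔW2 : MemLp ΔW 2 μ := by
    have hmem : MemLp (id : ℝ → ℝ) 2 (μ.map ΔW) := by
      rw [hlaw]; exact aux_gauss_memLp2 hv
    exact (memLp_map_measure_iff aestronglyMeasurable_id hΔW.aemeasurable).mp hmem
  have hΔWint : Integrable ΔW μ := hΔW2.integrable one_le_two
  have hsq_int : ∀ {f : Ω → ℝ}, MemLp f 2 μ → Integrable (fun ω => f ω ^ 2) μ :=
    fun hf => (memLp_two_iff_integrable_sq hf.1).mp hf
  have hΔWsq_int : Integrable (fun ω => ΔW ω ^ 2) μ := hsq_int hΔW2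
  have hΔWmean : ∫ ω, ΔW ω ∂μ = 0 := by
    have hmi := integral_map (μ := μ) (φ := ΔW) (f := fun y : ℝ => y) hΔW.aemeasurable
      aestronglyMeasurable_id
    rw [hlaw] at hmi
    rw [← hmi]
    exact aux_gauss_mean v
  set c2 : ℝ := ∫ ω, ΔW ω ^ 2 ∂μ with hc2_def
  have hc2_nonneg : 0 ≤ c2 := integral_nonneg fun ω => sq_nonneg _
  have hc2_pos : 0 < c2 := by
    rcases hc2_nonneg.lt_or_eq with hpos | heq
    · exact hpos
    · exfalso
      have hzero : (fun ω => ΔW ω ^ 2) =ᵐ[μ] 0 :=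
        (integral_eq_zero_iff_of_nonneg (fun ω => sq_nonneg _) hΔWsq_int).mp heq.symm
      have hae : ΔW =ᵐ[μ] fun _ => 0 := by
        filter_upwards [hzero] with ω hω
        exact (pow_eq_zero_iff (two_ne_zero)).mp hω
      have hmap0 : μ.map ΔW = Measure.dirac 0 := by
        rw [Measure.map_congr hae, Measure.map_const, measure_univ, one_smul]
      rw [hlaw] at hmap0
      have habs := gaussianReal_absolutelyContinuous' 0 hv
      have hcompl : gaussianReal 0 v ({(0 : ℝ)}ᶜ) = 0 := by
        rw [hmap0, Measure.dirac_apply' _ (measurableSet_singleton (0 : ℝ)).compl]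
        simp
      have hvol : (volume : Measure ℝ) ({(0 : ℝ)}ᶜ) = 0 := habs hcompl
      have hIoi : (volume : Measure ℝ) (Set.Ioi (0 : ℝ)) ≤ 0 := by
        rw [← hvol]
        exact measure_mono fun x hx => Set.mem_compl_singleton_iff.mpr (ne_of_gt hx)
      rw [Real.volume_Ioi] at hIoi
      simp at hIoi
  -- Independence tooling
  have hIF : ∀ X : Ω → ℝ, Measurable[m'] X → IndepFun ΔW X μ := fun X hX =>
    indep_of_indep_of_le_right hindep hX.comap_le
  have hGm' : Measurable[m'] Ynext := measurable_iff_comap_le.mpr le_sup_right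
  have hlift : ∀ {w : Ω → ℝ}, Measurable[𝒢] w → Measurable[m'] w := fun hw =>
    hw.mono le_sup_left le_rfl
  have hYint : Integrable Ynext μ := hYnext.integrable one_le_two
  set P : Ω → ℝ := μ[Ynext|𝒢] with hP_def
  have hPsm : StronglyMeasurable[𝒢] P := stronglyMeasurable_condExp
  have hP2 : MemLp P 2 μ := aux_memLp_condexp h𝒢 hYnext
  -- zstar is a.e. zero
  have hcondW : μ[ΔW|m'] =ᵐ[μ] fun _ => ∫ ω, ΔW ω ∂μ := by
    have hsm : StronglyMeasurable[MeasurableSpace.comap ΔW Real.measurableSpace] ΔW :=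
      Measurable.stronglyMeasurable (measurable_iff_comap_le.mpr le_rfl)
    exact condExp_indep_eq hΔW.comap_le hm' hsm hindep
  have hGW_int : Integrable (fun ω => Ynext ω * ΔW ω) μ :=
    (hIF Ynext hGm').symm.integrable_mul hYint hΔWint
  have hGWm' : μ[(fun ω => Ynext ω * ΔW ω)|m'] =ᵐ[μ] fun ω => Ynext ω * (μ[ΔW|m']) ω :=
    condExp_mul_of_stronglyMeasurable_left hGm'.stronglyMeasurable hGW_int hΔWint
  have hGW0 : μ[(fun ω => Ynext ω * ΔW ω)|𝒢] =ᵐ[μ] 0 := by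
    have htower := condExp_condExp_of_le (le_sup_left : 𝒢 ≤ m') hm'
      (f := fun ω => Ynext ω * ΔW ω) (μ := μ)
    have h0 : μ[(fun ω => Ynext ω * ΔW ω)|m'] =ᵐ[μ] (0 : Ω → ℝ) := by
      refine hGWm'.trans ?_
      filter_upwards [hcondW] with ω hω
      simp [hω, hΔWmean]
    refine htower.symm.trans ((condExp_congr_ae h0).trans ?_)
    rw [condExp_zero]
  have hzstar0 : zstar =ᵐ[μ] 0 := by
    refine hzstar.trans ?_
    filter_upwards [hGW0] with ω hω
    simp [hω]
  -- cross products with ΔW integrate to zero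
  have hcross : ∀ X : Ω → ℝ, Measurable[m'] X → Integrable X μ →
      ∫ ω, X ω * ΔW ω ∂μ = 0 := by
    intro X hX hXi
    have hmul := (hIF X hX).symm.integral_fun_mul_eq_mul_integral hXi.1 hΔWint.1
    rw [hΔWmean, mul_zero] at hmul
    exact hmul
  -- orthogonality of Ynext - P to 𝒢-measurable L² functions
  have horth : ∀ D : Ω → ℝ, StronglyMeasurable[𝒢] D → MemLp D 2 μ →
      ∫ ω, (Ynext ω - P ω) * D ω ∂μ = 0 := by
    intro D hDsm hD2
    have hDG_int : Integrable (fun ω => D ω * Ynext ω) μ := aux_L2_mul_integrable hD2 hYnext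
    have hDP_int : Integrable (fun ω => D ω * P ω) μ := aux_L2_mul_integrable hD2 hP2
    have hpull : μ[(fun ω => D ω * Ynext ω)|𝒢] =ᵐ[μ] fun ω => D ω * P ω :=
      condExp_mul_of_stronglyMeasurable_left hDsm hDG_int hYint
    have h1 : ∫ ω, D ω * Ynext ω ∂μ = ∫ ω, D ω * P ω ∂μ :=
      (integral_condExp h𝒢 (f := fun ω => D ω * Ynext ω)).symm.trans
        (integral_congr_ae hpull)
    have hsplit : ∫ ω, (Ynext ω - P ω) * D ω ∂μ
        = ∫ ω, D ω * Ynext ω ∂μ - ∫ ω, D ω * P ω ∂μ := by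
      rw [← integral_sub hDG_int hDP_int]
      exact integral_congr_ae (ae_of_all _ fun ω => by ring)
    rw [hsplit, h1, sub_self]
  -- key expansion of the objective
  have key : ∀ u zz : Ω → ℝ, Measurable[𝒢] u → Measurable[𝒢] zz →
      MemLp u 2 μ → MemLp zz 2 μ →
      ∫ ω, (Ynext ω - (u ω + zz ω * ΔW ω)) ^ 2 ∂μ
        = ∫ ω, (Ynext ω - P ω) ^ 2 ∂μ
          + (∫ ω, (P ω - u ω) ^ 2 ∂μ + c2 * ∫ ω, zz ω ^ 2 ∂μ) := by
    intro u zz hu hzz hu2 hzz2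
    have huM' : Measurable[m'] u := hlift hu
    have hzzM' : Measurable[m'] zz := hlift hzz
    have hE2 : Integrable (fun ω => (Ynext ω - P ω) ^ 2) μ := hsq_int (hYnext.sub hP2)
    have hD2m : MemLp (fun ω => P ω - u ω) 2 μ := hP2.sub hu2
    have hD2 : Integrable (fun ω => (P ω - u ω) ^ 2) μ := hsq_int hD2m
    have hzzsq : Integrable (fun ω => zz ω ^ 2) μ := hsq_int hzz2
    have hWsqInd : IndepFun (fun ω => zz ω ^ 2) (fun ω => ΔW ω ^ 2) μ :=
      ((hIF zz hzzM').comp (measurable_id.pow_const 2) (measurable_id.pow_const 2)).symm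
    have hprod_int : Integrable (fun ω => zz ω ^ 2 * ΔW ω ^ 2) μ :=
      hWsqInd.integrable_mul hzzsq hΔWsq_int
    have hprod : ∫ ω, zz ω ^ 2 * ΔW ω ^ 2 ∂μ = (∫ ω, zz ω ^ 2 ∂μ) * c2 :=
      hWsqInd.integral_fun_mul_eq_mul_integral hzzsq.1 hΔWsq_int.1
    have hED_int : Integrable (fun ω => (Ynext ω - P ω) * (P ω - u ω)) μ :=
      aux_L2_mul_integrable (hYnext.sub hP2) hD2m
    have hED : ∫ ω, (Ynext ω - P ω) * (P ω - u ω) ∂μ = 0 :=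
      horth _ (hPsm.sub hu.stronglyMeasurable) hD2m
    have hXm' : Measurable[m'] (fun ω => (Ynext ω - u ω) * zz ω) :=
      (hGm'.sub huM').mul hzzM'
    have hX_int : Integrable (fun ω => (Ynext ω - u ω) * zz ω) μ :=
      aux_L2_mul_integrable (hYnext.sub hu2) hzz2
    have hXW_int : Integrable (fun ω => ((Ynext ω - u ω) * zz ω) * ΔW ω) μ :=
      (hIF _ hXm').symm.integrable_mul hX_int hΔWint
    have hXW : ∫ ω, ((Ynext ω - u ω) * zz ω) * ΔW ω ∂μ = 0 := hcross _ hXm' hX_int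
    have hexp : ∀ ω, (Ynext ω - (u ω + zz ω * ΔW ω)) ^ 2
        = (Ynext ω - P ω) ^ 2 + (P ω - u ω) ^ 2 + zz ω ^ 2 * ΔW ω ^ 2
          + 2 * ((Ynext ω - P ω) * (P ω - u ω))
          + (-2) * (((Ynext ω - u ω) * zz ω) * ΔW ω) := fun ω => by ring
    calc ∫ ω, (Ynext ω - (u ω + zz ω * ΔW ω)) ^ 2 ∂μ
        = ∫ ω, ((Ynext ω - P ω) ^ 2 + (P ω - u ω) ^ 2 + zz ω ^ 2 * ΔW ω ^ 2
            + 2 * ((Ynext ω - P ω) * (P ω - u ω))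
            + (-2) * (((Ynext ω - u ω) * zz ω) * ΔW ω)) ∂μ :=
          integral_congr_ae (ae_of_all _ hexp)
      _ = ∫ ω, (Ynext ω - P ω) ^ 2 ∂μ
          + (∫ ω, (P ω - u ω) ^ 2 ∂μ + c2 * ∫ ω, zz ω ^ 2 ∂μ) := by
          have s1 : ∫ ω, ((Ynext ω - P ω) ^ 2 + (P ω - u ω) ^ 2 + zz ω ^ 2 * ΔW ω ^ 2
                + 2 * ((Ynext ω - P ω) * (P ω - u ω))
                + (-2) * (((Ynext ω - u ω) * zz ω) * ΔW ω)) ∂μ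
              = ∫ ω, ((Ynext ω - P ω) ^ 2 + (P ω - u ω) ^ 2 + zz ω ^ 2 * ΔW ω ^ 2
                + 2 * ((Ynext ω - P ω) * (P ω - u ω))) ∂μ
                + ∫ ω, (-2) * (((Ynext ω - u ω) * zz ω) * ΔW ω) ∂μ :=
            integral_add (((hE2.add hD2).add hprod_int).add (hED_int.const_mul 2))
              (hXW_int.const_mul (-2))
          have s2 : ∫ ω, ((Ynext ω - P ω) ^ 2 + (P ω - u ω) ^ 2 + zz ω ^ 2 * ΔW ω ^ 2
                + 2 * ((Ynext ω - P ω) * (P ω - u ω))) ∂μ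
              = ∫ ω, ((Ynext ω - P ω) ^ 2 + (P ω - u ω) ^ 2 + zz ω ^ 2 * ΔW ω ^ 2) ∂μ
                + ∫ ω, 2 * ((Ynext ω - P ω) * (P ω - u ω)) ∂μ :=
            integral_add ((hE2.add hD2).add hprod_int) (hED_int.const_mul 2)
          have s3 : ∫ ω, ((Ynext ω - P ω) ^ 2 + (P ω - u ω) ^ 2 + zz ω ^ 2 * ΔW ω ^ 2) ∂μ
              = ∫ ω, ((Ynext ω - P ω) ^ 2 + (P ω - u ω) ^ 2) ∂μ
                + ∫ ω, zz ω ^ 2 * ΔW ω ^ 2 ∂μ :=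
            integral_add (hE2.add hD2) hprod_int
          have s4 : ∫ ω, ((Ynext ω - P ω) ^ 2 + (P ω - u ω) ^ 2) ∂μ
              = ∫ ω, (Ynext ω - P ω) ^ 2 ∂μ + ∫ ω, (P ω - u ω) ^ 2 ∂μ :=
            integral_add hE2 hD2
          rw [s1, s2, s3, s4, integral_const_mul, integral_const_mul, hED, hXW, hprod]
          ring
  -- value at the claimed minimizer
  have hstar_int_eq : ∫ ω, |Ynext ω - (ystar ω - h * F ω + zstar ω * ΔW ω)| ^ 2 ∂μ
      = ∫ ω, (Ynext ω - P ω) ^ 2 ∂μ := by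
    refine integral_congr_ae ?_
    filter_upwards [hystar, hzstar0] with ω h1 h2
    simp only [Pi.zero_apply] at h2
    rw [h1, h2, sq_abs]
    ring
  intro y z hy hz hy2 hz2
  have hu : Measurable[𝒢] (fun ω => y ω - h * F ω) := hy.sub (hF.const_mul h)
  have hu2 : MemLp (fun ω => y ω - h * F ω) 2 μ := hy2.sub (hFL2.const_mul h)
  have hJ : ∫ ω, |Ynext ω - (y ω - h * F ω + z ω * ΔW ω)| ^ 2 ∂μ
      = ∫ ω, (Ynext ω - P ω) ^ 2 ∂μ
        + (∫ ω, (P ω - (y ω - h * F ω)) ^ 2 ∂μ + c2 * ∫ ω, z ω ^ 2 ∂μ) := by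
    have hk := key (fun ω => y ω - h * F ω) z hu hz hu2 hz2
    rw [← hk]
    exact integral_congr_ae (ae_of_all _ fun ω => by simp only [sq_abs])
  have hD_nonneg : 0 ≤ ∫ ω, (P ω - (y ω - h * F ω)) ^ 2 ∂μ :=
    integral_nonneg fun ω => sq_nonneg _
  have hz_nonneg : 0 ≤ ∫ ω, z ω ^ 2 ∂μ := integral_nonneg fun ω => sq_nonneg _
  constructor
  · rw [hstar_int_eq, hJ]
    nlinarith
  · intro heq
    rw [hJ, hstar_int_eq] at heq
    have h0 : ∫ ω, (P ω - (y ω - h * F ω)) ^ 2 ∂μ + c2 * ∫ ω, z ω ^ 2 ∂μ = 0 := by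
      linarith
    have hD0 : ∫ ω, (P ω - (y ω - h * F ω)) ^ 2 ∂μ = 0 := by nlinarith
    have hzint0 : ∫ ω, z ω ^ 2 ∂μ = 0 := by
      have hmz : c2 * ∫ ω, z ω ^ 2 ∂μ = 0 := by linarith
      exact (mul_eq_zero.mp hmz).resolve_left hc2_pos.ne'
    constructor
    · have haeD := (integral_eq_zero_iff_of_nonneg (fun ω => sq_nonneg _)
        (hsq_int (hP2.sub hu2))).mp hD0
      filter_upwards [haeD, hystar] with ω h1 h2
      simp only [Pi.zero_apply] at h1
      have h3 : P ω - (y ω - h * F ω) = 0 := (pow_eq_zero_iff (two_ne_zero)).mp h1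
      rw [h2]
      linarith
    · have haez := (integral_eq_zero_iff_of_nonneg (fun ω => sq_nonneg _)
        (hsq_int hz2)).mp hzint0
      refine ?_
      have hz0 : z =ᵐ[μ] 0 := by
        filter_upwards [haez] with ω h1
        simp only [Pi.zero_apply] at h1 ⊢
        exact (pow_eq_zero_iff (two_ne_zero)).mp h1
      exact hz0.trans hzstar0.symm
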